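/- arXiv:2309.15360 — 2 statements merged into one kernel-verified Lean document; each statement's English description precedes it below -/
import Mathlib

section
/- Let G_w denote the normalized extremal quasimodular form of weight w and depth 1 on SL₂(ℤ), defined by G₀ = 1 and the recursions G_{w+6} = ((w+6)/(72(w+1)(w+5))) K^up_w(G_w), where K^up_w = E₄∂_{w-1} - ((w+1)/12)E₆. Then for w ≡ 0 (mod 6), G_{w+12} = -((w+6)(w+12)/(432(w+7)(w+11))) (E₆ G_{w+6} - Δ G_w). -/
open PowerSeries

/-- The operator `D = q d/dq` acting on `q`-expansions (formal power series in `q`). -/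
noncomputable def Dq (f : PowerSeries ℚ) : PowerSeries ℚ :=
  PowerSeries.mk fun n => (n : ℚ) * PowerSeries.coeff n f

/-- The normalized Eisenstein series `E₂ = 1 - 24 ∑ σ₁(n) qⁿ`. -/
noncomputable def E2 : PowerSeries ℚ :=
  PowerSeries.mk fun n => if n = 0 then 1 else -24 * ∑ d ∈ n.divisors, (d : ℚ)

/-- The normalized Eisenstein series `E₄ = 1 + 240 ∑ σ₃(n) qⁿ`. -/
noncomputable def E4 : PowerSeries ℚ :=
  PowerSeries.mk fun n => if n = 0 then 1 else 240 * ∑ d ∈ n.divisors, (d : ℚ) ^ 3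

/-- The normalized Eisenstein series `E₆ = 1 - 504 ∑ σ₅(n) qⁿ`. -/
noncomputable def E6 : PowerSeries ℚ :=
  PowerSeries.mk fun n => if n = 0 then 1 else -504 * ∑ d ∈ n.divisors, (d : ℚ) ^ 5

/-- The discriminant `Δ = (E₄³ - E₆²)/1728`. -/
noncomputable def Δmf : PowerSeries ℚ := PowerSeries.C (R := ℚ) (1 / 1728) * (E4 ^ 3 - E6 ^ 2)

/-- The Serre derivative `∂ₖ = D - (k/12)E₂`. -/
noncomputable def serreD (k : ℚ) (f : PowerSeries ℚ) : PowerSeries ℚ :=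
  Dq f - PowerSeries.C (R := ℚ) (k / 12) * E2 * f

/-- `K^up_w = E₄ ∂_{w-1} - ((w+1)/12) E₆`. -/
noncomputable def Kup (w : ℚ) (f : PowerSeries ℚ) : PowerSeries ℚ :=
  E4 * serreD (w - 1) f - PowerSeries.C (R := ℚ) ((w + 1) / 12) * E6 * f

/-- `G n` is the normalized extremal quasimodular form of weight `6n` and depth 1,
defined by `G₀ = 1` and `G_{w+6} = ((w+6)/(72(w+1)(w+5))) K^up_w(G_w)` for `w = 6n`. -/
noncomputable def G : ℕ → PowerSeries ℚ
  | 0 => 1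
  | n + 1 =>
      PowerSeries.C (R := ℚ) ((6 * (n : ℚ) + 6) / (72 * (6 * (n : ℚ) + 1) * (6 * (n : ℚ) + 5))) *
        Kup (6 * (n : ℚ)) (G n)


namespace GRecAux
open Finset

/-- Solutions of `a*x + b*y = n` with positive entries, as `((a,b),(x,y))`. -/
def Tq (n : ℕ) : Finset ((ℕ × ℕ) × (ℕ × ℕ)) :=
  ((Icc 1 n ×ˢ Icc 1 n) ×ˢ (Icc 1 n ×ˢ Icc 1 n)).filter
    (fun p => p.1.1 * p.2.1 + p.1.2 * p.2.2 = n)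

lemma mem_Tq {n : ℕ} {a b x y : ℕ} :
    ((a,b),(x,y)) ∈ Tq n ↔ 0 < a ∧ 0 < b ∧ 0 < x ∧ 0 < y ∧ a*x + b*y = n := by
  simp only [Tq, mem_filter, mem_product, mem_Icc]
  constructor
  · rintro ⟨⟨⟨⟨ha1, _⟩, hb1, _⟩, ⟨hx1, _⟩, hy1, _⟩, he⟩
    exact ⟨ha1, hb1, hx1, hy1, he⟩
  · rintro ⟨ha, hb, hx, hy, he⟩
    have hax : a*x ≤ n := he ▸ Nat.le_add_right _ _
    have hby : b*y ≤ n := he ▸ Nat.le_add_left _ _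
    refine ⟨⟨⟨⟨ha, ?_⟩, hb, ?_⟩, ⟨hx, ?_⟩, hy, ?_⟩, he⟩
    · exact le_trans (Nat.le_mul_of_pos_right a hx) hax
    · exact le_trans (Nat.le_mul_of_pos_right b hy) hby
    · exact le_trans (Nat.le_mul_of_pos_left x ha) hax
    · exact le_trans (Nat.le_mul_of_pos_left y hb) hby

/-- Full swap `(a,b,x,y) ↦ (b,a,y,x)`. -/
lemma sum_swap_all (n : ℕ) (h : ℕ → ℕ → ℕ → ℕ → ℚ) :
    ∑ p ∈ Tq n, h p.1.1 p.1.2 p.2.1 p.2.2 = ∑ p ∈ Tq n, h p.1.2 p.1.1 p.2.2 p.2.1 := by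
  refine Finset.sum_nbij' (fun p => ((p.1.2, p.1.1), (p.2.2, p.2.1)))
    (fun p => ((p.1.2, p.1.1), (p.2.2, p.2.1))) ?_ ?_ (by intros; rfl) (by intros; rfl)
    (by intros; rfl) <;>
  · rintro ⟨⟨a, b⟩, x, y⟩ hp
    dsimp only at hp ⊢
    simp only [mem_Tq] at hp ⊢
    exact ⟨hp.2.1, hp.1, hp.2.2.2.1, hp.2.2.1, by omega⟩

/-- Role swap `(a,b,x,y) ↦ (x,y,a,b)`, full set. -/
lemma sum_role_all (n : ℕ) (h : ℕ → ℕ → ℕ → ℕ → ℚ) :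
    ∑ p ∈ Tq n, h p.1.1 p.1.2 p.2.1 p.2.2 = ∑ p ∈ Tq n, h p.2.1 p.2.2 p.1.1 p.1.2 := by
  refine Finset.sum_nbij' (fun p => (p.2, p.1)) (fun p => (p.2, p.1)) ?_ ?_
    (by intros; rfl) (by intros; rfl) (by intros; rfl) <;>
  · rintro ⟨⟨a, b⟩, x, y⟩ hp
    dsimp only at hp ⊢
    simp only [mem_Tq] at hp ⊢
    refine ⟨hp.2.2.1, hp.2.2.2.1, hp.1, hp.2.1, ?_⟩
    rw [mul_comm x a, mul_comm y b]; exact hp.2.2.2.2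

/-- Swap on the `x<y` part. -/
lemma sum_swap_lt (n : ℕ) (h : ℕ → ℕ → ℕ → ℕ → ℚ) :
    ∑ p ∈ (Tq n).filter (fun p => p.2.1 < p.2.2), h p.1.1 p.1.2 p.2.1 p.2.2
    = ∑ p ∈ (Tq n).filter (fun p => p.2.2 < p.2.1), h p.1.2 p.1.1 p.2.2 p.2.1 := by
  refine Finset.sum_nbij' (fun p => ((p.1.2, p.1.1), (p.2.2, p.2.1)))
    (fun p => ((p.1.2, p.1.1), (p.2.2, p.2.1))) ?_ ?_ (by intros; rfl) (by intros; rfl)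
    (by intros; rfl) <;>
  · rintro ⟨⟨a, b⟩, x, y⟩ hp
    dsimp only at hp ⊢
    simp only [mem_filter, mem_Tq] at hp ⊢
    exact ⟨⟨hp.1.2.1, hp.1.1, hp.1.2.2.2.1, hp.1.2.2.1, by omega⟩, hp.2⟩

/-- Role swap `{x<y} ↔ {a<b}`. -/
lemma sum_role_lt (n : ℕ) (h : ℕ → ℕ → ℕ → ℕ → ℚ) :
    ∑ p ∈ (Tq n).filter (fun p => p.2.1 < p.2.2), h p.1.1 p.1.2 p.2.1 p.2.2
    = ∑ p ∈ (Tq n).filter (fun p => p.1.1 < p.1.2), h p.2.1 p.2.2 p.1.1 p.1.2 := by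
  refine Finset.sum_nbij' (fun p => (p.2, p.1)) (fun p => (p.2, p.1)) ?_ ?_
    (by intros; rfl) (by intros; rfl) (by intros; rfl) <;>
  · rintro ⟨⟨a, b⟩, x, y⟩ hp
    dsimp only at hp ⊢
    simp only [mem_filter, mem_Tq] at hp ⊢
    refine ⟨⟨hp.1.2.2.1, hp.1.2.2.2.1, hp.1.1, hp.1.2.1, ?_⟩, hp.2⟩
    rw [mul_comm x a, mul_comm y b]; exact hp.1.2.2.2.2

/-- The core Liouville bijection `(a,b,x,y) ↦ (a, a+b, x-y, y)` on `{y<x}`. -/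
lemma sum_bijB (n : ℕ) (h : ℕ → ℕ → ℕ → ℕ → ℚ) :
    ∑ p ∈ (Tq n).filter (fun p => p.2.2 < p.2.1), h p.1.1 p.1.2 p.2.1 p.2.2
    = ∑ p ∈ (Tq n).filter (fun p => p.1.1 < p.1.2),
        h p.1.1 (p.1.2 - p.1.1) (p.2.1 + p.2.2) p.2.2 := by
  refine Finset.sum_nbij' (fun p => ((p.1.1, p.1.1 + p.1.2), (p.2.1 - p.2.2, p.2.2)))
    (fun p => ((p.1.1, p.1.2 - p.1.1), (p.2.1 + p.2.2, p.2.2))) ?_ ?_ ?_ ?_ ?_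
  · rintro ⟨⟨a, b⟩, x, y⟩ hp
    simp only [mem_filter, mem_Tq] at hp
    obtain ⟨⟨ha, hb, hx, hy, he⟩, hlt⟩ := hp
    simp only [mem_filter, mem_Tq]
    have h1 : a*(x-y) + a*y = a*x := by rw [← Nat.mul_add, Nat.sub_add_cancel hlt.le]
    have h2 : (a+b)*y = a*y + b*y := Nat.add_mul a b y
    exact ⟨⟨ha, by omega, by omega, hy, by omega⟩, by omega⟩
  · rintro ⟨⟨a, b⟩, x, y⟩ hp
    simp only [mem_filter, mem_Tq] at hp
    obtain ⟨⟨ha, hb, hx, hy, he⟩, hlt⟩ := hp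
    simp only [mem_filter, mem_Tq]
    have h1 : (b-a)*y + a*y = b*y := by rw [← Nat.add_mul, Nat.sub_add_cancel hlt.le]
    have h2 : a*(x+y) = a*x + a*y := Nat.mul_add a x y
    exact ⟨⟨ha, by omega, by omega, hy, by omega⟩, by omega⟩
  · rintro ⟨⟨a, b⟩, x, y⟩ hp
    simp only [mem_filter, mem_Tq] at hp
    dsimp only
    simp only [Prod.mk.injEq, true_and, and_true]
    omega
  · rintro ⟨⟨a, b⟩, x, y⟩ hp
    simp only [mem_filter, mem_Tq] at hp
    dsimp only
    simp only [Prod.mk.injEq, true_and, and_true]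
    omega
  · rintro ⟨⟨a, b⟩, x, y⟩ hp
    simp only [mem_filter, mem_Tq] at hp
    dsimp only
    have e1 : a + b - a = b := by omega
    have e2 : x - y + y = x := by omega
    simp only [e1, e2]



/-- Partition of the sum over `Tq` according to `x` vs `y`. -/
lemma sum_partition (n : ℕ) (F : (ℕ × ℕ) × (ℕ × ℕ) → ℚ) :
    ∑ p ∈ Tq n, F p
    = ∑ p ∈ (Tq n).filter (fun p => p.2.2 < p.2.1), F p
      + ∑ p ∈ (Tq n).filter (fun p => p.2.1 < p.2.2), F p
      + ∑ p ∈ (Tq n).filter (fun p => p.2.1 = p.2.2), F p := by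
  have h1 := sum_filter_add_sum_filter_not (Tq n) (fun p => p.2.2 < p.2.1) F
  have h2 := sum_filter_add_sum_filter_not ((Tq n).filter (fun p => ¬ p.2.2 < p.2.1))
    (fun p => p.2.1 < p.2.2) F
  rw [filter_filter, filter_filter] at h2
  have e1 : (Tq n).filter (fun p => ¬ p.2.2 < p.2.1 ∧ p.2.1 < p.2.2)
      = (Tq n).filter (fun p => p.2.1 < p.2.2) := by
    apply filter_congr; intro p _; constructor
    · rintro ⟨_, h⟩; exact h
    · intro h; exact ⟨by omega, h⟩
  have e2 : (Tq n).filter (fun p => ¬ p.2.2 < p.2.1 ∧ ¬ p.2.1 < p.2.2)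
      = (Tq n).filter (fun p => p.2.1 = p.2.2) := by
    apply filter_congr; intro p _; constructor
    · rintro ⟨h1', h2'⟩; omega
    · intro h; constructor <;> omega
  rw [e1, e2] at h2
  linarith

/-- Diagonal `x = y` reduces to a sum over divisors. -/
lemma sum_diag (n : ℕ) (hn : 0 < n) (h : ℕ → ℕ → ℕ → ℕ → ℚ) :
    ∑ p ∈ (Tq n).filter (fun p => p.2.1 = p.2.2), h p.1.1 p.1.2 p.2.1 p.2.2
    = ∑ e ∈ n.divisors, ∑ a ∈ Icc 1 (n/e - 1), h a (n/e - a) e e := by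
  rw [Finset.sum_sigma']
  refine (Finset.sum_nbij' (fun q => ((q.2, n/q.1 - q.2), (q.1, q.1)))
    (fun p => (⟨p.2.1, p.1.1⟩ : (_ : ℕ) × ℕ)) ?_ ?_ ?_ ?_ ?_).symm
  · rintro ⟨e, a⟩ hq
    simp only [Finset.mem_sigma, Nat.mem_divisors, mem_Icc] at hq
    obtain ⟨⟨⟨c, hc⟩, hn0⟩, ha1, ha2⟩ := hq
    try dsimp only
    simp only [mem_filter, mem_Tq]
    have he : 0 < e := by
      rcases Nat.eq_zero_or_pos e with h0 | h0
      · subst h0; simp at hc; omega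
      · exact h0
    have hde : n / e = c := by rw [hc]; exact Nat.mul_div_cancel_left c he
    rw [hde] at ha2 ⊢
    have hc1 : 0 < c := by
      rcases Nat.eq_zero_or_pos c with h0 | h0
      · subst h0; simp at hc; omega
      · exact h0
    refine ⟨⟨by omega, by omega, he, he, ?_⟩, trivial⟩
    have h3 : a * e + (c - a) * e = c * e := by
      rw [← Nat.add_mul, Nat.add_sub_cancel' (by omega)]
    have hc' : c * e = n := by rw [hc]; ring
    omega
  · rintro ⟨⟨a, b⟩, x, y⟩ hp
    simp only [mem_filter, mem_Tq] at hp
    obtain ⟨⟨ha, hb, hx, hy, he⟩, hxy⟩ := hp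
    try dsimp only at hxy
    subst hxy
    simp only [Finset.mem_sigma, Nat.mem_divisors, mem_Icc]
    have hmul : (a + b) * x = n := by rw [Nat.add_mul]; omega
    have hdiv : n / x = a + b := by rw [← hmul]; exact Nat.mul_div_cancel (a+b) hx
    exact ⟨⟨⟨a+b, by rw [← hmul]; ring⟩, by omega⟩, by omega, by omega⟩
  · rintro ⟨e, a⟩ hq
    rfl
  · rintro ⟨⟨a, b⟩, x, y⟩ hp
    simp only [mem_filter, mem_Tq] at hp
    obtain ⟨⟨ha, hb, hx, hy, he⟩, hxy⟩ := hp
    try dsimp only at hxy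
    subst hxy
    have hmul : (a + b) * x = n := by rw [Nat.add_mul]; omega
    have hdiv : n / x = a + b := by rw [← hmul]; exact Nat.mul_div_cancel (a+b) hx
    try dsimp only
    simp only [Prod.mk.injEq, true_and, and_true]
    omega
  · rintro ⟨e, a⟩ hq
    rfl



/-- divisor power sums -/
noncomputable def sg (i n : ℕ) : ℚ := ∑ d ∈ n.divisors, (d:ℚ)^i

lemma conv_eq (i j n : ℕ) (hn : 0 < n) :
    ∑ k ∈ Ico 1 n, sg i k * sg j (n-k)
    = ∑ p ∈ Tq n, (p.1.1:ℚ)^i * (p.1.2:ℚ)^j := by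
  have step1 : ∀ k, sg i k * sg j (n-k)
      = ∑ q ∈ (k.divisorsAntidiagonal ×ˢ (n-k).divisorsAntidiagonal),
          (q.1.1:ℚ)^i * (q.2.1:ℚ)^j := by
    intro k
    rw [Finset.sum_product]
    unfold sg
    rw [← Nat.sum_divisorsAntidiagonal (fun a _ => (a:ℚ)^i),
        ← Nat.sum_divisorsAntidiagonal (fun b _ => (b:ℚ)^j), Finset.sum_mul_sum]
  rw [Finset.sum_congr rfl (fun k _ => step1 k), Finset.sum_sigma']
  refine Finset.sum_nbij' (fun q => ((q.2.1.1, q.2.2.1), (q.2.1.2, q.2.2.2)))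
    (fun p => (⟨p.1.1 * p.2.1, ((p.1.1, p.2.1), (p.1.2, p.2.2))⟩ : (_ : ℕ) × ((ℕ×ℕ)×(ℕ×ℕ))))
    ?_ ?_ ?_ ?_ ?_
  · rintro ⟨k, ⟨a, x⟩, b, y⟩ hq
    simp only [Finset.mem_sigma, Finset.mem_product, mem_Ico,
      Nat.mem_divisorsAntidiagonal] at hq
    obtain ⟨⟨hk1, hk2⟩, ⟨hax, hk0⟩, hby, hnk0⟩ := hq
    try dsimp only
    simp only [mem_Tq]
    have ha : 0 < a := by
      rcases Nat.eq_zero_or_pos a with h0 | h0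
      · exfalso; apply hk0; subst h0; simp at hax; omega
      · exact h0
    have hx : 0 < x := by
      rcases Nat.eq_zero_or_pos x with h0 | h0
      · exfalso; apply hk0; subst h0; simp at hax; omega
      · exact h0
    have hb : 0 < b := by
      rcases Nat.eq_zero_or_pos b with h0 | h0
      · exfalso; apply hnk0; subst h0; simp at hby; omega
      · exact h0
    have hy : 0 < y := by
      rcases Nat.eq_zero_or_pos y with h0 | h0
      · exfalso; apply hnk0; subst h0; simp at hby; omega
      · exact h0
    exact ⟨ha, hb, hx, hy, by omega⟩
  · rintro ⟨⟨a, b⟩, x, y⟩ hp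
    simp only [mem_Tq] at hp
    obtain ⟨ha, hb, hx, hy, he⟩ := hp
    try dsimp only
    simp only [Finset.mem_sigma, Finset.mem_product, mem_Ico,
      Nat.mem_divisorsAntidiagonal]
    have hby : b * y = n - a * x := by omega
    have hax1 : 1 ≤ a * x := Nat.one_le_iff_ne_zero.mpr (by positivity)
    have hby1 : 1 ≤ b * y := Nat.one_le_iff_ne_zero.mpr (by positivity)
    refine ⟨⟨hax1, by omega⟩, ⟨trivial, by omega⟩, hby, by omega⟩
  · rintro ⟨k, ⟨a, x⟩, b, y⟩ hq
    simp only [Finset.mem_sigma, Finset.mem_product, mem_Ico,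
      Nat.mem_divisorsAntidiagonal] at hq
    obtain ⟨⟨hk1, hk2⟩, ⟨hax, hk0⟩, hby, hnk0⟩ := hq
    subst hax
    rfl
  · rintro ⟨⟨a, b⟩, x, y⟩ hp
    rfl
  · rintro ⟨k, ⟨a, x⟩, b, y⟩ hq
    rfl


noncomputable def Xq (i j n : ℕ) : ℚ :=
  ∑ e ∈ n.divisors, ∑ a ∈ Icc 1 (n/e - 1), (a:ℚ)^i * ((n/e - a : ℕ):ℚ)^j

noncomputable def Yq (k n : ℕ) : ℚ :=
  ∑ e ∈ n.divisors, ∑ _a ∈ Icc 1 (n/e - 1), (e:ℚ)^k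

lemma Ueq (i j n : ℕ) (hn : 0 < n) :
    ∑ p ∈ Tq n, (p.1.1:ℚ)^i * (p.1.2:ℚ)^j
    = (∑ p ∈ (Tq n).filter (fun p => p.2.2 < p.2.1),
        ((p.1.1:ℚ)^i * (p.1.2:ℚ)^j + (p.1.2:ℚ)^i * (p.1.1:ℚ)^j)) + Xq i j n := by
  rw [sum_partition n (fun p => (p.1.1:ℚ)^i * (p.1.2:ℚ)^j)]
  rw [sum_swap_lt n (fun a b x y => (a:ℚ)^i * (b:ℚ)^j)]
  rw [sum_diag n hn (fun a b x y => (a:ℚ)^i * (b:ℚ)^j)]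
  rw [← Finset.sum_add_distrib]
  rfl

lemma Beq (i j n : ℕ) (hn : 0 < n) :
    ∑ p ∈ Tq n, (p.1.1:ℚ)^i * (p.1.2:ℚ)^j
    = (∑ p ∈ (Tq n).filter (fun p => p.2.2 < p.2.1),
        (((p.1.1 + p.1.2 : ℕ):ℚ)^i * (p.1.1:ℚ)^j + (p.1.1:ℚ)^i * ((p.1.1 + p.1.2 : ℕ):ℚ)^j))
      + Yq (i+j) n := by
  rw [sum_role_all n (fun a b x y => (a:ℚ)^i * (b:ℚ)^j)]
  rw [sum_partition n (fun p => (p.2.1:ℚ)^i * (p.2.2:ℚ)^j)]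
  -- T1
  rw [← sum_swap_lt n (fun a b x y => (y:ℚ)^i * (x:ℚ)^j)]
  rw [sum_role_lt n (fun a b x y => (y:ℚ)^i * (x:ℚ)^j)]
  have t1 : ∑ p ∈ (Tq n).filter (fun p => p.1.1 < p.1.2), (p.1.2:ℚ)^i * (p.1.1:ℚ)^j
      = ∑ p ∈ (Tq n).filter (fun p => p.1.1 < p.1.2),
          ((p.1.1 + (p.1.2 - p.1.1) : ℕ):ℚ)^i * (p.1.1:ℚ)^j := by
    refine Finset.sum_congr rfl fun p hp => ?_
    rw [mem_filter] at hp
    have : p.1.1 + (p.1.2 - p.1.1) = p.1.2 := by omega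
    rw [this]
  rw [t1, ← sum_bijB n (fun a b x y => ((a + b : ℕ):ℚ)^i * (a:ℚ)^j)]
  -- T2
  rw [sum_role_lt n (fun a b x y => (x:ℚ)^i * (y:ℚ)^j)]
  have t2 : ∑ p ∈ (Tq n).filter (fun p => p.1.1 < p.1.2), (p.1.1:ℚ)^i * (p.1.2:ℚ)^j
      = ∑ p ∈ (Tq n).filter (fun p => p.1.1 < p.1.2),
          (p.1.1:ℚ)^i * ((p.1.1 + (p.1.2 - p.1.1) : ℕ):ℚ)^j := by
    refine Finset.sum_congr rfl fun p hp => ?_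
    rw [mem_filter] at hp
    have : p.1.1 + (p.1.2 - p.1.1) = p.1.2 := by omega
    rw [this]
  rw [t2, ← sum_bijB n (fun a b x y => (a:ℚ)^i * ((a + b : ℕ):ℚ)^j)]
  -- T3
  rw [sum_diag n hn (fun a b x y => (x:ℚ)^i * (y:ℚ)^j)]
  have t3 : ∑ e ∈ n.divisors, ∑ a ∈ Icc 1 (n/e - 1), (e:ℚ)^i * (e:ℚ)^j = Yq (i+j) n := by
    unfold Yq
    refine Finset.sum_congr rfl fun e _ => Finset.sum_congr rfl fun a _ => ?_
    rw [← pow_add]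
  rw [t3, ← Finset.sum_add_distrib]

lemma Erel (i j n : ℕ) (hn : 0 < n) :
    ∑ p ∈ (Tq n).filter (fun p => p.2.2 < p.2.1),
      ((p.1.1:ℚ)^i * (p.1.2:ℚ)^j + (p.1.2:ℚ)^i * (p.1.1:ℚ)^j
        - ((p.1.1 + p.1.2 : ℕ):ℚ)^i * (p.1.1:ℚ)^j
        - (p.1.1:ℚ)^i * ((p.1.1 + p.1.2 : ℕ):ℚ)^j)
    = Yq (i+j) n - Xq i j n := by
  have hU := Ueq i j n hn
  have hB := Beq i j n hn
  simp only [Finset.sum_add_distrib, Finset.sum_sub_distrib] at hU hB ⊢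
  linarith


lemma psum0 (m : ℕ) : ∑ _a ∈ Icc 1 m, (1:ℚ) = m := by
  simp

lemma psum1 (m : ℕ) : ∑ a ∈ Icc 1 m, (a:ℚ) = m*(m+1)/2 := by
  induction m with
  | zero => simp
  | succ m ih => rw [Finset.sum_Icc_succ_top (by omega), ih]; push_cast; ring

lemma psum2 (m : ℕ) : ∑ a ∈ Icc 1 m, (a:ℚ)^2 = m*(m+1)*(2*m+1)/6 := by
  induction m with
  | zero => simp
  | succ m ih => rw [Finset.sum_Icc_succ_top (by omega), ih]; push_cast; ring

lemma psum3 (m : ℕ) : ∑ a ∈ Icc 1 m, (a:ℚ)^3 = (m*(m+1)/2)^2 := by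
  induction m with
  | zero => simp
  | succ m ih => rw [Finset.sum_Icc_succ_top (by omega), ih]; push_cast; ring

lemma psum4 (m : ℕ) : ∑ a ∈ Icc 1 m, (a:ℚ)^4 = m*(m+1)*(2*m+1)*(3*m^2+3*m-1)/30 := by
  induction m with
  | zero => simp
  | succ m ih => rw [Finset.sum_Icc_succ_top (by omega), ih]; push_cast; ring

lemma psum5 (m : ℕ) : ∑ a ∈ Icc 1 m, (a:ℚ)^5 = m^2*(m+1)^2*(2*m^2+2*m-1)/12 := by
  induction m with
  | zero => simp
  | succ m ih => rw [Finset.sum_Icc_succ_top (by omega), ih]; push_cast; ring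

lemma psum6 (m : ℕ) : ∑ a ∈ Icc 1 m, (a:ℚ)^6 = m*(m+1)*(2*m+1)*(3*m^4+6*m^3-3*m+1)/42 := by
  induction m with
  | zero => simp
  | succ m ih => rw [Finset.sum_Icc_succ_top (by omega), ih]; push_cast; ring


lemma inner11 (d : ℕ) (hd : 0 < d) :
    ∑ a ∈ Icc 1 (d - 1), (a:ℚ)^1 * ((d - a : ℕ):ℚ)^1 = ((-1 : ℚ)/6) * (d:ℚ)^1 + ((1 : ℚ)/6) * (d:ℚ)^3 := by
  obtain ⟨m, rfl⟩ : ∃ m, d = m + 1 := ⟨d - 1, by omega⟩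
  have hIcc : m + 1 - 1 = m := by omega
  rw [hIcc]
  have step : ∀ a ∈ Icc 1 m, (a:ℚ)^1 * ((m + 1 - a : ℕ):ℚ)^1
      = (1 : ℚ) * (((m:ℚ)+1) * (a:ℚ)) + (-1 : ℚ) * ((a:ℚ)^2) := by
    intro a ha
    rw [mem_Icc] at ha
    rw [Nat.cast_sub (by omega)]
    push_cast
    ring
  rw [Finset.sum_congr rfl step]
  simp only [Finset.sum_add_distrib, ← Finset.mul_sum, psum0, psum1, psum2, psum3,
    psum4, psum5, psum6]
  push_cast
  ring

lemma Xeval11 (n : ℕ) (hn : 0 < n) :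
    Xq 1 1 n = ((-1 : ℚ)/6) * sg 1 n + ((1 : ℚ)/6) * sg 3 n := by
  have hdd := Nat.sum_div_divisors (α := ℚ) n
    (fun d => ∑ a ∈ Icc 1 (d - 1), (a:ℚ)^1 * ((d - a : ℕ):ℚ)^1)
  rw [Xq, hdd]
  rw [Finset.sum_congr rfl (fun d hd => inner11 d (Nat.pos_of_mem_divisors hd))]
  simp only [Finset.sum_add_distrib, ← Finset.mul_sum, sg]

lemma inner02 (d : ℕ) (hd : 0 < d) :
    ∑ a ∈ Icc 1 (d - 1), (a:ℚ)^0 * ((d - a : ℕ):ℚ)^2 = ((1 : ℚ)/6) * (d:ℚ)^1 + ((-1 : ℚ)/2) * (d:ℚ)^2 + ((1 : ℚ)/3) * (d:ℚ)^3 := by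
  obtain ⟨m, rfl⟩ : ∃ m, d = m + 1 := ⟨d - 1, by omega⟩
  have hIcc : m + 1 - 1 = m := by omega
  rw [hIcc]
  have step : ∀ a ∈ Icc 1 m, (a:ℚ)^0 * ((m + 1 - a : ℕ):ℚ)^2
      = (1 : ℚ) * (((m:ℚ)+1)^2 * (1:ℚ)) + (-2 : ℚ) * (((m:ℚ)+1) * (a:ℚ)) + (1 : ℚ) * ((a:ℚ)^2) := by
    intro a ha
    rw [mem_Icc] at ha
    rw [Nat.cast_sub (by omega)]
    push_cast
    ring
  rw [Finset.sum_congr rfl step]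
  simp only [Finset.sum_add_distrib, ← Finset.mul_sum, psum0, psum1, psum2, psum3,
    psum4, psum5, psum6]
  push_cast
  ring

lemma Xeval02 (n : ℕ) (hn : 0 < n) :
    Xq 0 2 n = ((1 : ℚ)/6) * sg 1 n + ((-1 : ℚ)/2) * sg 2 n + ((1 : ℚ)/3) * sg 3 n := by
  have hdd := Nat.sum_div_divisors (α := ℚ) n
    (fun d => ∑ a ∈ Icc 1 (d - 1), (a:ℚ)^0 * ((d - a : ℕ):ℚ)^2)
  rw [Xq, hdd]
  rw [Finset.sum_congr rfl (fun d hd => inner02 d (Nat.pos_of_mem_divisors hd))]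
  simp only [Finset.sum_add_distrib, ← Finset.mul_sum, sg]

lemma inner13 (d : ℕ) (hd : 0 < d) :
    ∑ a ∈ Icc 1 (d - 1), (a:ℚ)^1 * ((d - a : ℕ):ℚ)^3 = ((1 : ℚ)/30) * (d:ℚ)^1 + ((-1 : ℚ)/12) * (d:ℚ)^3 + ((1 : ℚ)/20) * (d:ℚ)^5 := by
  obtain ⟨m, rfl⟩ : ∃ m, d = m + 1 := ⟨d - 1, by omega⟩
  have hIcc : m + 1 - 1 = m := by omega
  rw [hIcc]
  have step : ∀ a ∈ Icc 1 m, (a:ℚ)^1 * ((m + 1 - a : ℕ):ℚ)^3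
      = (1 : ℚ) * (((m:ℚ)+1)^3 * (a:ℚ)) + (-3 : ℚ) * (((m:ℚ)+1)^2 * (a:ℚ)^2) + (3 : ℚ) * (((m:ℚ)+1) * (a:ℚ)^3) + (-1 : ℚ) * ((a:ℚ)^4) := by
    intro a ha
    rw [mem_Icc] at ha
    rw [Nat.cast_sub (by omega)]
    push_cast
    ring
  rw [Finset.sum_congr rfl step]
  simp only [Finset.sum_add_distrib, ← Finset.mul_sum, psum0, psum1, psum2, psum3,
    psum4, psum5, psum6]
  push_cast
  ring

lemma Xeval13 (n : ℕ) (hn : 0 < n) :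
    Xq 1 3 n = ((1 : ℚ)/30) * sg 1 n + ((-1 : ℚ)/12) * sg 3 n + ((1 : ℚ)/20) * sg 5 n := by
  have hdd := Nat.sum_div_divisors (α := ℚ) n
    (fun d => ∑ a ∈ Icc 1 (d - 1), (a:ℚ)^1 * ((d - a : ℕ):ℚ)^3)
  rw [Xq, hdd]
  rw [Finset.sum_congr rfl (fun d hd => inner13 d (Nat.pos_of_mem_divisors hd))]
  simp only [Finset.sum_add_distrib, ← Finset.mul_sum, sg]

lemma inner04 (d : ℕ) (hd : 0 < d) :
    ∑ a ∈ Icc 1 (d - 1), (a:ℚ)^0 * ((d - a : ℕ):ℚ)^4 = ((-1 : ℚ)/30) * (d:ℚ)^1 + ((1 : ℚ)/3) * (d:ℚ)^3 + ((-1 : ℚ)/2) * (d:ℚ)^4 + ((1 : ℚ)/5) * (d:ℚ)^5 := by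
  obtain ⟨m, rfl⟩ : ∃ m, d = m + 1 := ⟨d - 1, by omega⟩
  have hIcc : m + 1 - 1 = m := by omega
  rw [hIcc]
  have step : ∀ a ∈ Icc 1 m, (a:ℚ)^0 * ((m + 1 - a : ℕ):ℚ)^4
      = (1 : ℚ) * (((m:ℚ)+1)^4 * (1:ℚ)) + (-4 : ℚ) * (((m:ℚ)+1)^3 * (a:ℚ)) + (6 : ℚ) * (((m:ℚ)+1)^2 * (a:ℚ)^2) + (-4 : ℚ) * (((m:ℚ)+1) * (a:ℚ)^3) + (1 : ℚ) * ((a:ℚ)^4) := by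
    intro a ha
    rw [mem_Icc] at ha
    rw [Nat.cast_sub (by omega)]
    push_cast
    ring
  rw [Finset.sum_congr rfl step]
  simp only [Finset.sum_add_distrib, ← Finset.mul_sum, psum0, psum1, psum2, psum3,
    psum4, psum5, psum6]
  push_cast
  ring

lemma Xeval04 (n : ℕ) (hn : 0 < n) :
    Xq 0 4 n = ((-1 : ℚ)/30) * sg 1 n + ((1 : ℚ)/3) * sg 3 n + ((-1 : ℚ)/2) * sg 4 n + ((1 : ℚ)/5) * sg 5 n := by
  have hdd := Nat.sum_div_divisors (α := ℚ) n
    (fun d => ∑ a ∈ Icc 1 (d - 1), (a:ℚ)^0 * ((d - a : ℕ):ℚ)^4)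
  rw [Xq, hdd]
  rw [Finset.sum_congr rfl (fun d hd => inner04 d (Nat.pos_of_mem_divisors hd))]
  simp only [Finset.sum_add_distrib, ← Finset.mul_sum, sg]

lemma inner22 (d : ℕ) (hd : 0 < d) :
    ∑ a ∈ Icc 1 (d - 1), (a:ℚ)^2 * ((d - a : ℕ):ℚ)^2 = ((-1 : ℚ)/30) * (d:ℚ)^1 + ((1 : ℚ)/30) * (d:ℚ)^5 := by
  obtain ⟨m, rfl⟩ : ∃ m, d = m + 1 := ⟨d - 1, by omega⟩
  have hIcc : m + 1 - 1 = m := by omega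
  rw [hIcc]
  have step : ∀ a ∈ Icc 1 m, (a:ℚ)^2 * ((m + 1 - a : ℕ):ℚ)^2
      = (1 : ℚ) * (((m:ℚ)+1)^2 * (a:ℚ)^2) + (-2 : ℚ) * (((m:ℚ)+1) * (a:ℚ)^3) + (1 : ℚ) * ((a:ℚ)^4) := by
    intro a ha
    rw [mem_Icc] at ha
    rw [Nat.cast_sub (by omega)]
    push_cast
    ring
  rw [Finset.sum_congr rfl step]
  simp only [Finset.sum_add_distrib, ← Finset.mul_sum, psum0, psum1, psum2, psum3,
    psum4, psum5, psum6]
  push_cast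
  ring

lemma Xeval22 (n : ℕ) (hn : 0 < n) :
    Xq 2 2 n = ((-1 : ℚ)/30) * sg 1 n + ((1 : ℚ)/30) * sg 5 n := by
  have hdd := Nat.sum_div_divisors (α := ℚ) n
    (fun d => ∑ a ∈ Icc 1 (d - 1), (a:ℚ)^2 * ((d - a : ℕ):ℚ)^2)
  rw [Xq, hdd]
  rw [Finset.sum_congr rfl (fun d hd => inner22 d (Nat.pos_of_mem_divisors hd))]
  simp only [Finset.sum_add_distrib, ← Finset.mul_sum, sg]

lemma inner15 (d : ℕ) (hd : 0 < d) :
    ∑ a ∈ Icc 1 (d - 1), (a:ℚ)^1 * ((d - a : ℕ):ℚ)^5 = ((-1 : ℚ)/42) * (d:ℚ)^1 + ((1 : ℚ)/12) * (d:ℚ)^3 + ((-1 : ℚ)/12) * (d:ℚ)^5 + ((1 : ℚ)/42) * (d:ℚ)^7 := by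
  obtain ⟨m, rfl⟩ : ∃ m, d = m + 1 := ⟨d - 1, by omega⟩
  have hIcc : m + 1 - 1 = m := by omega
  rw [hIcc]
  have step : ∀ a ∈ Icc 1 m, (a:ℚ)^1 * ((m + 1 - a : ℕ):ℚ)^5
      = (1 : ℚ) * (((m:ℚ)+1)^5 * (a:ℚ)) + (-5 : ℚ) * (((m:ℚ)+1)^4 * (a:ℚ)^2) + (10 : ℚ) * (((m:ℚ)+1)^3 * (a:ℚ)^3) + (-10 : ℚ) * (((m:ℚ)+1)^2 * (a:ℚ)^4) + (5 : ℚ) * (((m:ℚ)+1) * (a:ℚ)^5) + (-1 : ℚ) * ((a:ℚ)^6) := by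
    intro a ha
    rw [mem_Icc] at ha
    rw [Nat.cast_sub (by omega)]
    push_cast
    ring
  rw [Finset.sum_congr rfl step]
  simp only [Finset.sum_add_distrib, ← Finset.mul_sum, psum0, psum1, psum2, psum3,
    psum4, psum5, psum6]
  push_cast
  ring

lemma Xeval15 (n : ℕ) (hn : 0 < n) :
    Xq 1 5 n = ((-1 : ℚ)/42) * sg 1 n + ((1 : ℚ)/12) * sg 3 n + ((-1 : ℚ)/12) * sg 5 n + ((1 : ℚ)/42) * sg 7 n := by
  have hdd := Nat.sum_div_divisors (α := ℚ) n
    (fun d => ∑ a ∈ Icc 1 (d - 1), (a:ℚ)^1 * ((d - a : ℕ):ℚ)^5)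
  rw [Xq, hdd]
  rw [Finset.sum_congr rfl (fun d hd => inner15 d (Nat.pos_of_mem_divisors hd))]
  simp only [Finset.sum_add_distrib, ← Finset.mul_sum, sg]

lemma inner06 (d : ℕ) (hd : 0 < d) :
    ∑ a ∈ Icc 1 (d - 1), (a:ℚ)^0 * ((d - a : ℕ):ℚ)^6 = ((1 : ℚ)/42) * (d:ℚ)^1 + ((-1 : ℚ)/6) * (d:ℚ)^3 + ((1 : ℚ)/2) * (d:ℚ)^5 + ((-1 : ℚ)/2) * (d:ℚ)^6 + ((1 : ℚ)/7) * (d:ℚ)^7 := by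
  obtain ⟨m, rfl⟩ : ∃ m, d = m + 1 := ⟨d - 1, by omega⟩
  have hIcc : m + 1 - 1 = m := by omega
  rw [hIcc]
  have step : ∀ a ∈ Icc 1 m, (a:ℚ)^0 * ((m + 1 - a : ℕ):ℚ)^6
      = (1 : ℚ) * (((m:ℚ)+1)^6 * (1:ℚ)) + (-6 : ℚ) * (((m:ℚ)+1)^5 * (a:ℚ)) + (15 : ℚ) * (((m:ℚ)+1)^4 * (a:ℚ)^2) + (-20 : ℚ) * (((m:ℚ)+1)^3 * (a:ℚ)^3) + (15 : ℚ) * (((m:ℚ)+1)^2 * (a:ℚ)^4) + (-6 : ℚ) * (((m:ℚ)+1) * (a:ℚ)^5) + (1 : ℚ) * ((a:ℚ)^6) := by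
    intro a ha
    rw [mem_Icc] at ha
    rw [Nat.cast_sub (by omega)]
    push_cast
    ring
  rw [Finset.sum_congr rfl step]
  simp only [Finset.sum_add_distrib, ← Finset.mul_sum, psum0, psum1, psum2, psum3,
    psum4, psum5, psum6]
  push_cast
  ring

lemma Xeval06 (n : ℕ) (hn : 0 < n) :
    Xq 0 6 n = ((1 : ℚ)/42) * sg 1 n + ((-1 : ℚ)/6) * sg 3 n + ((1 : ℚ)/2) * sg 5 n + ((-1 : ℚ)/2) * sg 6 n + ((1 : ℚ)/7) * sg 7 n := by
  have hdd := Nat.sum_div_divisors (α := ℚ) n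
    (fun d => ∑ a ∈ Icc 1 (d - 1), (a:ℚ)^0 * ((d - a : ℕ):ℚ)^6)
  rw [Xq, hdd]
  rw [Finset.sum_congr rfl (fun d hd => inner06 d (Nat.pos_of_mem_divisors hd))]
  simp only [Finset.sum_add_distrib, ← Finset.mul_sum, sg]

lemma inner24 (d : ℕ) (hd : 0 < d) :
    ∑ a ∈ Icc 1 (d - 1), (a:ℚ)^2 * ((d - a : ℕ):ℚ)^4 = ((1 : ℚ)/42) * (d:ℚ)^1 + ((-1 : ℚ)/30) * (d:ℚ)^3 + ((1 : ℚ)/105) * (d:ℚ)^7 := by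
  obtain ⟨m, rfl⟩ : ∃ m, d = m + 1 := ⟨d - 1, by omega⟩
  have hIcc : m + 1 - 1 = m := by omega
  rw [hIcc]
  have step : ∀ a ∈ Icc 1 m, (a:ℚ)^2 * ((m + 1 - a : ℕ):ℚ)^4
      = (1 : ℚ) * (((m:ℚ)+1)^4 * (a:ℚ)^2) + (-4 : ℚ) * (((m:ℚ)+1)^3 * (a:ℚ)^3) + (6 : ℚ) * (((m:ℚ)+1)^2 * (a:ℚ)^4) + (-4 : ℚ) * (((m:ℚ)+1) * (a:ℚ)^5) + (1 : ℚ) * ((a:ℚ)^6) := by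
    intro a ha
    rw [mem_Icc] at ha
    rw [Nat.cast_sub (by omega)]
    push_cast
    ring
  rw [Finset.sum_congr rfl step]
  simp only [Finset.sum_add_distrib, ← Finset.mul_sum, psum0, psum1, psum2, psum3,
    psum4, psum5, psum6]
  push_cast
  ring

lemma Xeval24 (n : ℕ) (hn : 0 < n) :
    Xq 2 4 n = ((1 : ℚ)/42) * sg 1 n + ((-1 : ℚ)/30) * sg 3 n + ((1 : ℚ)/105) * sg 7 n := by
  have hdd := Nat.sum_div_divisors (α := ℚ) n
    (fun d => ∑ a ∈ Icc 1 (d - 1), (a:ℚ)^2 * ((d - a : ℕ):ℚ)^4)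
  rw [Xq, hdd]
  rw [Finset.sum_congr rfl (fun d hd => inner24 d (Nat.pos_of_mem_divisors hd))]
  simp only [Finset.sum_add_distrib, ← Finset.mul_sum, sg]

lemma inner33 (d : ℕ) (hd : 0 < d) :
    ∑ a ∈ Icc 1 (d - 1), (a:ℚ)^3 * ((d - a : ℕ):ℚ)^3 = ((-1 : ℚ)/42) * (d:ℚ)^1 + ((1 : ℚ)/60) * (d:ℚ)^3 + ((1 : ℚ)/140) * (d:ℚ)^7 := by
  obtain ⟨m, rfl⟩ : ∃ m, d = m + 1 := ⟨d - 1, by omega⟩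
  have hIcc : m + 1 - 1 = m := by omega
  rw [hIcc]
  have step : ∀ a ∈ Icc 1 m, (a:ℚ)^3 * ((m + 1 - a : ℕ):ℚ)^3
      = (1 : ℚ) * (((m:ℚ)+1)^3 * (a:ℚ)^3) + (-3 : ℚ) * (((m:ℚ)+1)^2 * (a:ℚ)^4) + (3 : ℚ) * (((m:ℚ)+1) * (a:ℚ)^5) + (-1 : ℚ) * ((a:ℚ)^6) := by
    intro a ha
    rw [mem_Icc] at ha
    rw [Nat.cast_sub (by omega)]
    push_cast
    ring
  rw [Finset.sum_congr rfl step]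
  simp only [Finset.sum_add_distrib, ← Finset.mul_sum, psum0, psum1, psum2, psum3,
    psum4, psum5, psum6]
  push_cast
  ring

lemma Xeval33 (n : ℕ) (hn : 0 < n) :
    Xq 3 3 n = ((-1 : ℚ)/42) * sg 1 n + ((1 : ℚ)/60) * sg 3 n + ((1 : ℚ)/140) * sg 7 n := by
  have hdd := Nat.sum_div_divisors (α := ℚ) n
    (fun d => ∑ a ∈ Icc 1 (d - 1), (a:ℚ)^3 * ((d - a : ℕ):ℚ)^3)
  rw [Xq, hdd]
  rw [Finset.sum_congr rfl (fun d hd => inner33 d (Nat.pos_of_mem_divisors hd))]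
  simp only [Finset.sum_add_distrib, ← Finset.mul_sum, sg]

lemma Yeval (k n : ℕ) (hn : 0 < n) : Yq (k+1) n = n * sg k n - sg (k+1) n := by
  unfold Yq
  have step : ∀ e ∈ n.divisors,
      (∑ _a ∈ Icc 1 (n/e - 1), (e:ℚ)^(k+1)) = (n:ℚ) * (e:ℚ)^k - (e:ℚ)^(k+1) := by
    intro e he
    obtain ⟨hdvd, hne⟩ := Nat.mem_divisors.mp he
    have he0 : 0 < e := Nat.pos_of_mem_divisors he
    have h2 : 1 ≤ n / e := Nat.one_le_div_iff he0 |>.mpr (Nat.le_of_dvd hn hdvd)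
    have h1 : ((n/e : ℕ):ℚ) * e = n := by
      rw [← Nat.cast_mul, Nat.div_mul_cancel hdvd]
    rw [Finset.sum_const, Nat.card_Icc]
    have hc : (n / e - 1 + 1 - 1 : ℕ) = n / e - 1 := by omega
    rw [hc, nsmul_eq_mul, Nat.cast_sub h2]
    push_cast
    rw [pow_succ]
    linear_combination ((e:ℚ)^k) * h1
  rw [Finset.sum_congr rfl step, Finset.sum_sub_distrib, ← Finset.mul_sum]
  rfl


lemma U11 (n : ℕ) (hn : 0 < n) :
    ∑ p ∈ Tq n, (p.1.1:ℚ)^1 * (p.1.2:ℚ)^1 = ((5 : ℚ)/12) * sg 3 n + ((1 : ℚ)/12) * sg 1 n - (n:ℚ)/2 * sg 1 n := by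
  have e02 := Erel 0 2 n hn
  have e11 := Erel 1 1 n hn
  have hY := Yeval 1 n hn
  simp only [Nat.reduceAdd] at e02 e11 hY ⊢
  have key : ∑ p ∈ (Tq n).filter (fun p => p.2.2 < p.2.1),
      ((p.1.1:ℚ)^1 * (p.1.2:ℚ)^1 + (p.1.2:ℚ)^1 * (p.1.1:ℚ)^1)
      = (-1 : ℚ) * (∑ p ∈ (Tq n).filter (fun p => p.2.2 < p.2.1), ((p.1.1:ℚ)^0 * (p.1.2:ℚ)^2 + (p.1.2:ℚ)^0 * (p.1.1:ℚ)^2 - ((p.1.1 + p.1.2 : ℕ):ℚ)^0 * (p.1.1:ℚ)^2 - (p.1.1:ℚ)^0 * ((p.1.1 + p.1.2 : ℕ):ℚ)^2)) + ((1 : ℚ)/2) * (∑ p ∈ (Tq n).filter (fun p => p.2.2 < p.2.1), ((p.1.1:ℚ)^1 * (p.1.2:ℚ)^1 + (p.1.2:ℚ)^1 * (p.1.1:ℚ)^1 - ((p.1.1 + p.1.2 : ℕ):ℚ)^1 * (p.1.1:ℚ)^1 - (p.1.1:ℚ)^1 * ((p.1.1 + p.1.2 : ℕ):ℚ)^1))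 := by
    simp only [Finset.mul_sum, ← Finset.sum_add_distrib]
    refine Finset.sum_congr rfl fun p hp => ?_
    push_cast
    ring
  rw [Ueq 1 1 n hn, key, e02, e11, hY, Xeval02 n hn, Xeval11 n hn]
  ring

lemma U13 (n : ℕ) (hn : 0 < n) :
    ∑ p ∈ Tq n, (p.1.1:ℚ)^1 * (p.1.2:ℚ)^3 = ((7 : ℚ)/80) * sg 5 n + ((1 : ℚ)/24) * sg 3 n - ((1 : ℚ)/240) * sg 1 n - (n:ℚ)/8 * sg 3 n := by
  have e04 := Erel 0 4 n hn
  have e13 := Erel 1 3 n hn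
  have e22 := Erel 2 2 n hn
  have hY := Yeval 3 n hn
  simp only [Nat.reduceAdd] at e04 e13 e22 hY ⊢
  have key : ∑ p ∈ (Tq n).filter (fun p => p.2.2 < p.2.1),
      ((p.1.1:ℚ)^1 * (p.1.2:ℚ)^3 + (p.1.2:ℚ)^1 * (p.1.1:ℚ)^3)
      = ((-1 : ℚ)/4) * (∑ p ∈ (Tq n).filter (fun p => p.2.2 < p.2.1), ((p.1.1:ℚ)^0 * (p.1.2:ℚ)^4 + (p.1.2:ℚ)^0 * (p.1.1:ℚ)^4 - ((p.1.1 + p.1.2 : ℕ):ℚ)^0 * (p.1.1:ℚ)^4 - (p.1.1:ℚ)^0 * ((p.1.1 + p.1.2 : ℕ):ℚ)^4)) + ((1 : ℚ)/2) * (∑ p ∈ (Tq n).filter (fun p => p.2.2 < p.2.1), ((p.1.1:ℚ)^1 * (p.1.2:ℚ)^3 + (p.1.2:ℚ)^1 * (p.1.1:ℚ)^3 - ((p.1.1 + p.1.2 : ℕ):ℚ)^1 * (p.1.1:ℚ)^3 - (p.1.1:ℚ)^1 * ((p.1.1 + p.1.2 : ℕ):ℚ)^3)) + ((-3 : ℚ)/8)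 * (∑ p ∈ (Tq n).filter (fun p => p.2.2 < p.2.1), ((p.1.1:ℚ)^2 * (p.1.2:ℚ)^2 + (p.1.2:ℚ)^2 * (p.1.1:ℚ)^2 - ((p.1.1 + p.1.2 : ℕ):ℚ)^2 * (p.1.1:ℚ)^2 - (p.1.1:ℚ)^2 * ((p.1.1 + p.1.2 : ℕ):ℚ)^2)) := by
    simp only [Finset.mul_sum, ← Finset.sum_add_distrib]
    refine Finset.sum_congr rfl fun p hp => ?_
    push_cast
    ring
  rw [Ueq 1 3 n hn, key, e04, e13, e22, hY, Xeval04 n hn, Xeval13 n hn, Xeval22 n hn]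
  ring

lemma U15 (n : ℕ) (hn : 0 < n) :
    ∑ p ∈ Tq n, (p.1.1:ℚ)^1 * (p.1.2:ℚ)^5 = ((5 : ℚ)/126) * sg 7 n + ((1 : ℚ)/24) * sg 5 n + ((1 : ℚ)/504) * sg 1 n - (n:ℚ)/12 * sg 5 n := by
  have e06 := Erel 0 6 n hn
  have e15 := Erel 1 5 n hn
  have e24 := Erel 2 4 n hn
  have hY := Yeval 5 n hn
  simp only [Nat.reduceAdd] at e06 e15 e24 hY ⊢
  have key : ∑ p ∈ (Tq n).filter (fun p => p.2.2 < p.2.1),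
      ((p.1.1:ℚ)^1 * (p.1.2:ℚ)^5 + (p.1.2:ℚ)^1 * (p.1.1:ℚ)^5)
      = ((-1 : ℚ)/6) * (∑ p ∈ (Tq n).filter (fun p => p.2.2 < p.2.1), ((p.1.1:ℚ)^0 * (p.1.2:ℚ)^6 + (p.1.2:ℚ)^0 * (p.1.1:ℚ)^6 - ((p.1.1 + p.1.2 : ℕ):ℚ)^0 * (p.1.1:ℚ)^6 - (p.1.1:ℚ)^0 * ((p.1.1 + p.1.2 : ℕ):ℚ)^6)) + ((1 : ℚ)/2) * (∑ p ∈ (Tq n).filter (fun p => p.2.2 < p.2.1), ((p.1.1:ℚ)^1 * (p.1.2:ℚ)^5 + (p.1.2:ℚ)^1 * (p.1.1:ℚ)^5 - ((p.1.1 + p.1.2 : ℕ):ℚ)^1 * (p.1.1:ℚ)^5 - (p.1.1:ℚ)^1 * ((p.1.1 + p.1.2 : ℕ):ℚ)^5)) + ((-5 : ℚ)/12) * (∑ p ∈ (Tq n).filter (fun p => p.2.2 < p.2.1), ((p.1.1:ℚ)^2 * (p.1.2:ℚ)^4 + (p.1.2:ℚ)^2 * (p.1.1:ℚ)^4 - ((p.1.1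 + p.1.2 : ℕ):ℚ)^2 * (p.1.1:ℚ)^4 - (p.1.1:ℚ)^2 * ((p.1.1 + p.1.2 : ℕ):ℚ)^4)) := by
    simp only [Finset.mul_sum, ← Finset.sum_add_distrib]
    refine Finset.sum_congr rfl fun p hp => ?_
    push_cast
    ring
  rw [Ueq 1 5 n hn, key, e06, e15, e24, hY, Xeval06 n hn, Xeval15 n hn, Xeval24 n hn]
  ring

lemma U33 (n : ℕ) (hn : 0 < n) :
    ∑ p ∈ Tq n, (p.1.1:ℚ)^3 * (p.1.2:ℚ)^3 = ((1 : ℚ)/120) * sg 7 n - ((1 : ℚ)/120) * sg 3 n := by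
  have e24 := Erel 2 4 n hn
  have e33 := Erel 3 3 n hn
  have hY := Yeval 5 n hn
  simp only [Nat.reduceAdd] at e24 e33 hY ⊢
  have key : ∑ p ∈ (Tq n).filter (fun p => p.2.2 < p.2.1),
      ((p.1.1:ℚ)^3 * (p.1.2:ℚ)^3 + (p.1.2:ℚ)^3 * (p.1.1:ℚ)^3)
      = ((-1 : ℚ)/2) * (∑ p ∈ (Tq n).filter (fun p => p.2.2 < p.2.1), ((p.1.1:ℚ)^2 * (p.1.2:ℚ)^4 + (p.1.2:ℚ)^2 * (p.1.1:ℚ)^4 - ((p.1.1 + p.1.2 : ℕ):ℚ)^2 * (p.1.1:ℚ)^4 - (p.1.1:ℚ)^2 * ((p.1.1 + p.1.2 : ℕ):ℚ)^4)) + ((1 : ℚ)/2) * (∑ p ∈ (Tq n).filter (fun p => p.2.2 < p.2.1), ((p.1.1:ℚ)^3 * (p.1.2:ℚ)^3 + (p.1.2:ℚ)^3 * (p.1.1:ℚ)^3 - ((p.1.1 + p.1.2 : ℕ):ℚ)^3 * (p.1.1:ℚ)^3 - (p.1.1:ℚ)^3 * ((p.1.1 + p.1.2 : ℕ):ℚ)^3))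 := by
    simp only [Finset.mul_sum, ← Finset.sum_add_distrib]
    refine Finset.sum_congr rfl fun p hp => ?_
    push_cast
    ring
  rw [Ueq 3 3 n hn, key, e24, e33, hY, Xeval24 n hn, Xeval33 n hn]
  ring


/-! coefficient helpers -/

lemma coeff_Dq (n : ℕ) (f : PowerSeries ℚ) : coeff n (Dq f) = n * coeff n f :=
  coeff_mk _ _

lemma coeffE2 (n : ℕ) (hn : n ≠ 0) : coeff n E2 = -24 * sg 1 n := by
  simp [E2, coeff_mk, hn, sg]

lemma coeffE4 (n : ℕ) (hn : n ≠ 0) : coeff n E4 = 240 * sg 3 n := by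
  simp [E4, coeff_mk, hn, sg]

lemma coeffE6 (n : ℕ) (hn : n ≠ 0) : coeff n E6 = -504 * sg 5 n := by
  simp [E6, coeff_mk, hn, sg]

lemma coeff0E2 : coeff 0 E2 = 1 := by simp [E2, coeff_mk]
lemma coeff0E4 : coeff 0 E4 = 1 := by simp [E4, coeff_mk]
lemma coeff0E6 : coeff 0 E6 = 1 := by simp [E6, coeff_mk]

lemma antidiag_split (n : ℕ) (hn : 0 < n) (F : ℕ → ℕ → ℚ) :
    ∑ p ∈ Finset.HasAntidiagonal.antidiagonal n, F p.1 p.2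
    = F 0 n + F n 0 + ∑ k ∈ Ico 1 n, F k (n-k) := by
  rw [Finset.Nat.sum_antidiagonal_eq_sum_range_succ_mk, Finset.sum_range_succ,
    Finset.range_eq_Ico, Finset.sum_eq_sum_Ico_succ_bot hn]
  rw [Nat.sub_zero, Nat.sub_self]
  ring

lemma R1c : C (R := ℚ) 12 * Dq E2 = E2 * E2 - E4 := by
  ext n
  rw [PowerSeries.coeff_C_mul, map_sub, PowerSeries.coeff_mul, coeff_Dq]
  rcases Nat.eq_zero_or_pos n with rfl | hn
  · simp [E2, E4, coeff_mk]
  · rw [antidiag_split n hn (fun u v => coeff u E2 * coeff v E2)]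
    have hmid : ∑ k ∈ Ico 1 n, (coeff k E2) * (coeff (n-k) E2)
        = (576 : ℚ) * ∑ k ∈ Ico 1 n, sg 1 k * sg 1 (n-k) := by
      rw [Finset.mul_sum]
      refine Finset.sum_congr rfl fun k hk => ?_
      rw [mem_Ico] at hk
      rw [coeffE2 k (by omega), coeffE2 (n-k) (by omega)]
      ring
    rw [hmid, conv_eq 1 1 n hn, U11 n hn, coeffE2 n hn.ne', coeffE4 n hn.ne',
      coeff0E2]
    ring

lemma R2c : C (R := ℚ) 3 * Dq E4 = E2 * E4 - E6 := by
  ext n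
  rw [PowerSeries.coeff_C_mul, map_sub, PowerSeries.coeff_mul, coeff_Dq]
  rcases Nat.eq_zero_or_pos n with rfl | hn
  · simp [E2, E4, E6, coeff_mk]
  · rw [antidiag_split n hn (fun u v => coeff u E2 * coeff v E4)]
    have hmid : ∑ k ∈ Ico 1 n, (coeff k E2) * (coeff (n-k) E4)
        = (-5760 : ℚ) * ∑ k ∈ Ico 1 n, sg 1 k * sg 3 (n-k) := by
      rw [Finset.mul_sum]
      refine Finset.sum_congr rfl fun k hk => ?_
      rw [mem_Ico] at hk
      rw [coeffE2 k (by omega), coeffE4 (n-k) (by omega)]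
      ring
    rw [hmid, conv_eq 1 3 n hn, U13 n hn, coeffE4 n hn.ne', coeffE2 n hn.ne',
      coeff0E2, coeff0E4, coeffE6 n hn.ne']
    ring

lemma R3c : C (R := ℚ) 2 * Dq E6 = E2 * E6 - E4 * E4 := by
  ext n
  rw [PowerSeries.coeff_C_mul, map_sub, PowerSeries.coeff_mul, PowerSeries.coeff_mul, coeff_Dq]
  rcases Nat.eq_zero_or_pos n with rfl | hn
  · simp [E2, E4, E6, coeff_mk]
  · rw [antidiag_split n hn (fun u v => coeff u E2 * coeff v E6),
      antidiag_split n hn (fun u v => coeff u E4 * coeff v E4)]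
    have hmid1 : ∑ k ∈ Ico 1 n, (coeff k E2) * (coeff (n-k) E6)
        = (12096 : ℚ) * ∑ k ∈ Ico 1 n, sg 1 k * sg 5 (n-k) := by
      rw [Finset.mul_sum]
      refine Finset.sum_congr rfl fun k hk => ?_
      rw [mem_Ico] at hk
      rw [coeffE2 k (by omega), coeffE6 (n-k) (by omega)]
      ring
    have hmid2 : ∑ k ∈ Ico 1 n, (coeff k E4) * (coeff (n-k) E4)
        = (57600 : ℚ) * ∑ k ∈ Ico 1 n, sg 3 k * sg 3 (n-k) := by
      rw [Finset.mul_sum]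
      refine Finset.sum_congr rfl fun k hk => ?_
      rw [mem_Ico] at hk
      rw [coeffE4 k (by omega), coeffE4 (n-k) (by omega)]
      ring
    rw [hmid1, hmid2, conv_eq 1 5 n hn, conv_eq 3 3 n hn, U15 n hn, U33 n hn,
      coeffE6 n hn.ne', coeffE2 n hn.ne', coeff0E2, coeff0E6, coeffE4 n hn.ne', coeff0E4]
    ring


/-! ### Dq calculus -/

lemma Dq_zero : Dq 0 = 0 := by
  ext n; simp [Dq, coeff_mk]

lemma Dq_one : Dq 1 = 0 := by
  ext n
  simp only [Dq, coeff_mk, PowerSeries.coeff_one, map_zero]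
  split <;> simp_all

lemma Dq_C (r : ℚ) : Dq (C (R := ℚ) r) = 0 := by
  ext n
  simp only [Dq, coeff_mk, PowerSeries.coeff_C, map_zero]
  split <;> simp_all

lemma Dq_add (f g : PowerSeries ℚ) : Dq (f + g) = Dq f + Dq g := by
  ext n; simp [Dq, coeff_mk, mul_add]

lemma Dq_sub (f g : PowerSeries ℚ) : Dq (f - g) = Dq f - Dq g := by
  ext n; simp [Dq, coeff_mk, mul_sub]

lemma Dq_mul (f g : PowerSeries ℚ) : Dq (f * g) = Dq f * g + f * Dq g := by
  ext n
  simp only [Dq, coeff_mk, map_add, PowerSeries.coeff_mul, Finset.mul_sum,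
    ← Finset.sum_add_distrib]
  refine Finset.sum_congr rfl fun p hp => ?_
  have hmem := Finset.HasAntidiagonal.mem_antidiagonal.mp hp
  have hc : (n:ℚ) = (p.1:ℚ) + (p.2:ℚ) := by exact_mod_cast hmem.symm
  rw [hc]; ring

/-! ### scalar helpers -/

noncomputable def mu : PowerSeries ℚ := C (R := ℚ) (1/12)

lemma Cne (r : ℚ) (hr : r ≠ 0) : PowerSeries.C (R := ℚ) r ≠ 0 := fun h =>
  hr (by simpa using congrArg (PowerSeries.coeff 0) h)

lemma Cdiv12 (k : ℚ) : C (R := ℚ) (k/12) = C (R := ℚ) k * mu := by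
  rw [mu, ← map_mul]; congr 1; ring

lemma Cdiv144 (k : ℚ) : C (R := ℚ) (k/144) = C (R := ℚ) k * (mu * mu) := by
  rw [mu, ← map_mul, ← map_mul]; congr 1; ring

lemma DeltaEq : Δmf = mu * mu * mu * (E4^3 - E6^2) := by
  rw [Δmf, mu, ← map_mul, ← map_mul]; norm_num

/-! ### μ-form Ramanujan rules -/

lemma Dq_mu : Dq mu = 0 := by rw [mu, Dq_C]

lemma DqE2 : Dq E2 = mu * (E2 * E2 - E4) := by
  have h12 : mu * (C (R := ℚ) 12) = 1 := by rw [mu, ← map_mul]; norm_num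
  rw [← one_mul (Dq E2), ← h12, mul_assoc, R1c]

lemma DqE4 : Dq E4 = C (R := ℚ) 4 * mu * (E2 * E4 - E6) := by
  have h12 : (C (R := ℚ) 4 * mu) * (C (R := ℚ) 3) = 1 := by
    rw [mu, ← map_mul, ← map_mul]; norm_num
  rw [← one_mul (Dq E4), ← h12, mul_assoc, R2c]

lemma DqE6 : Dq E6 = C (R := ℚ) 6 * mu * (E2 * E6 - E4 * E4) := by
  have h12 : (C (R := ℚ) 6 * mu) * (C (R := ℚ) 2) = 1 := by
    rw [mu, ← map_mul, ← map_mul]; norm_num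
  rw [← one_mul (Dq E6), ← h12, mul_assoc, R3c]

/-! ### the second-order operator -/

noncomputable def Lop (w : ℚ) (f : PowerSeries ℚ) : PowerSeries ℚ :=
  serreD (w+1) (serreD (w-1) f) - C (R := ℚ) ((w^2-1)/144) * E4 * f

lemma serreD_Cmul (k r : ℚ) (f : PowerSeries ℚ) :
    serreD k (C (R := ℚ) r * f) = C (R := ℚ) r * serreD k f := by
  simp only [serreD, Dq_mul, Dq_C]; ring

lemma Kup_Cmul (w r : ℚ) (f : PowerSeries ℚ) :
    Kup w (C (R := ℚ) r * f) = C (R := ℚ) r * Kup w f := by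
  simp only [Kup, serreD_Cmul]; ring

lemma Lop_Cmul (w r : ℚ) (f : PowerSeries ℚ) :
    Lop w (C (R := ℚ) r * f) = C (R := ℚ) r * Lop w f := by
  simp only [Lop, serreD_Cmul]; ring

/-- Key operator identity I2 : `L_{w+6} ∘ K_w` factors through `L_w`. -/
lemma I2 (w : ℚ) (f : PowerSeries ℚ) :
    Lop (w+6) (Kup w f)
    = E4 * (Dq (Lop w f) - C (R := ℚ) (w+3) * mu * (E2 * Lop w f))
      - C (R := ℚ) (w+9) * mu * (E6 * Lop w f) := by
  simp only [Lop, Kup, serreD]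
  simp only [Dq_mul, Dq_sub, Dq_add, Dq_C, Dq_one, Dq_zero, Dq_mu, DqE2, DqE4, DqE6]
  simp only [Cdiv12, Cdiv144, map_add, map_sub, map_mul, map_pow, map_one, map_ofNat, map_zero, Dq_zero, Dq_mu]
  ring

/-- Key operator identity I1 : `K_{w+6} ∘ K_w` in terms of `L_w`, `K_w` and `Δ`. -/
lemma I1 (w : ℚ) (f : PowerSeries ℚ) :
    Kup (w+6) (Kup w f)
    = E4^2 * Lop w f
      - C (R := ℚ) 2 * C (R := ℚ) (w+6) * mu * (E6 * Kup w f)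
      + C (R := ℚ) ((w+1)*(w+5)) * (mu * mu) * ((E4^3 - E6^2) * f) := by
  simp only [Lop, Kup, serreD]
  simp only [Dq_mul, Dq_sub, Dq_add, Dq_C, Dq_one, Dq_zero, Dq_mu, DqE2, DqE4, DqE6]
  simp only [Cdiv12, Cdiv144, map_add, map_sub, map_mul, map_pow, map_one, map_ofNat, map_zero, Dq_zero, Dq_mu]
  ring

/-- The Kaneko–Zagier equation for `G n`. -/
lemma KZ : ∀ n : ℕ, Lop (6*(n:ℚ)) (G n) = 0 := by
  intro n
  induction n with
  | zero =>
      have h0 : (6*((0:ℕ):ℚ)) = 0 := by norm_num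
      rw [h0, show G 0 = 1 from rfl]
      simp only [Lop, serreD]
      simp only [Dq_mul, Dq_sub, Dq_add, Dq_C, Dq_one, Dq_zero, Dq_mu, DqE2]
      simp only [Cdiv12, Cdiv144, map_add, map_sub, map_mul, map_pow, map_one, map_ofNat, map_zero, Dq_zero, Dq_mu]
      ring
  | succ n ih =>
      have hcast : (6*((n+1 : ℕ):ℚ)) = 6*(n:ℚ) + 6 := by push_cast; ring
      rw [hcast, G, Lop_Cmul, I2, ih]
      simp [Dq_zero]



lemma hstep (m : ℕ) :
    C (R := ℚ) (72*(6*(m:ℚ)+1)*(6*(m:ℚ)+5)) * G (m+1)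
    = C (R := ℚ) (6*(m:ℚ)+6) * Kup (6*(m:ℚ)) (G m) := by
  have hG : G (m+1)
      = C (R := ℚ) ((6*(m:ℚ)+6) / (72*(6*(m:ℚ)+1)*(6*(m:ℚ)+5))) * Kup (6*(m:ℚ)) (G m) := rfl
  have h1 : (6*(m:ℚ)+1) ≠ 0 := by positivity
  have h5 : (6*(m:ℚ)+5) ≠ 0 := by positivity
  have key : (72*(6*(m:ℚ)+1)*(6*(m:ℚ)+5)) * ((6*(m:ℚ)+6)/(72*(6*(m:ℚ)+1)*(6*(m:ℚ)+5)))
      = 6*(m:ℚ)+6 := by field_simp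
  rw [hG, ← mul_assoc, ← map_mul, key]

lemma hKey (w : ℚ) (f : PowerSeries ℚ) (hL : Lop w f = 0) :
    C (R := ℚ) 6 * Kup (w+6) (Kup w f)
    = -(C (R := ℚ) (w+6) * (E6 * Kup w f)) + C (R := ℚ) (72*(w+1)*(w+5)) * (Δmf * f) := by
  have hI := I1 w f
  rw [hL] at hI
  have m1 : C (R := ℚ) 6 * (C (R := ℚ) 2 * mu) = 1 := by
    rw [mu, ← map_mul, ← map_mul]; norm_num
  have m2 : C (R := ℚ) 6 * (C (R := ℚ) ((w+1)*(w+5)) * (mu * mu))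
      = C (R := ℚ) (72*(w+1)*(w+5)) * (mu * mu * mu) := by
    simp only [mu, ← map_mul]; congr 1; ring
  have hD := DeltaEq
  linear_combination (C (R := ℚ) 6) * hI - (C (R := ℚ) (w+6) * (E6 * Kup w f)) * m1
    + ((E4^3 - E6^2) * f) * m2 - (C (R := ℚ) (72*(w+1)*(w+5)) * f) * hD


end GRecAux

open GRecAux in
/-- For `w ≡ 0 (mod 6)`,
`G_{w+12} = -((w+6)(w+12)/(432(w+7)(w+11))) (E₆ G_{w+6} - Δ G_w)`. -/
theorem G_linear_recursion (n : ℕ) :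
    G (n + 2) =
      -(PowerSeries.C (R := ℚ) (((6 * (n : ℚ) + 6) * (6 * (n : ℚ) + 12)) /
          (432 * (6 * (n : ℚ) + 7) * (6 * (n : ℚ) + 11)))) *
        (E6 * G (n + 1) - Δmf * G n) := by
  have h7 : (6*(n:ℚ)+7) ≠ 0 := by positivity
  have h11 : (6*(n:ℚ)+11) ≠ 0 := by positivity
  have hc : (432*(6*(n:ℚ)+7)*(6*(n:ℚ)+11)) ≠ 0 := by positivity
  apply mul_left_cancel₀ (Cne _ hc)
  have hfrac : (432*(6*(n:ℚ)+7)*(6*(n:ℚ)+11))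
      * (((6*(n:ℚ)+6) * (6*(n:ℚ)+12)) / (432*(6*(n:ℚ)+7)*(6*(n:ℚ)+11)))
      = (6*(n:ℚ)+6) * (6*(n:ℚ)+12) := by field_simp
  rw [neg_mul, mul_neg, ← mul_assoc, ← map_mul, hfrac]
  -- assemble
  have h3 : C (R := ℚ) (72*(6*(n:ℚ)+1)*(6*(n:ℚ)+5)) * Kup (6*(n:ℚ)+6) (G (n+1))
      = C (R := ℚ) (6*(n:ℚ)+6) * Kup (6*(n:ℚ)+6) (Kup (6*(n:ℚ)) (G n)) := by
    rw [← Kup_Cmul, ← Kup_Cmul, hstep n]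
  have hKeyn := hKey (6*(n:ℚ)) (G n) (KZ n)
  have hpre : C (R := ℚ) (72*(6*(n:ℚ)+1)*(6*(n:ℚ)+5)) * (C (R := ℚ) 6 * Kup (6*(n:ℚ)+6) (G (n+1)))
      = C (R := ℚ) (72*(6*(n:ℚ)+1)*(6*(n:ℚ)+5)) *
          (-(C (R := ℚ) (6*(n:ℚ)+6) * (E6 * G (n+1))) + C (R := ℚ) (6*(n:ℚ)+6) * (Δmf * G n)) := by
    linear_combination (C (R := ℚ) 6) * h3 + (C (R := ℚ) (6*(n:ℚ)+6)) * hKeyn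
      + (C (R := ℚ) (6*(n:ℚ)+6) * E6) * (hstep n)
  have h15 : (6*(n:ℚ)+1) ≠ 0 := by positivity
  have h55 : (6*(n:ℚ)+5) ≠ 0 := by positivity
  have hstar := mul_left_cancel₀ (Cne _ (by positivity)) hpre
  have h2 := hstep (n+1)
  push_cast at h2
  rw [show (6*((n:ℚ)+1)) = 6*(n:ℚ)+6 from by ring] at h2
  simp only [map_add, map_sub, map_mul, map_pow, map_one, map_ofNat, map_natCast] at h2 hstar ⊢
  linear_combination (6 : PowerSeries ℚ) * h2 + (6*((n : PowerSeries ℚ))+12) * hstar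
end

section
/- For n ≥ 1, the following identity of polynomials holds: X·A_{n,6}(X) = A_{n+1,2}(X) + (6(12n-1)(12n+5)/(n(2n+1)))·A_{n,2}(X), where A_{n,2} and A_{n,6} are the Atkin-like polynomials defined by their three-term recursions. -/
open Polynomial

/-- Recursion coefficient `a_{n,2} = 24(144n²-29)/((2n+1)(2n-1))`. -/
noncomputable def a2 (n : ℕ) : ℚ :=
  24 * (144 * (n : ℚ) ^ 2 - 29) / ((2 * (n : ℚ) + 1) * (2 * (n : ℚ) - 1))

/-- Recursion coefficient `b_{n,2} = 36(12n-13)(12n-7)(12n-5)(12n+1)/(n(n-1)(2n-1)²)`. -/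
noncomputable def b2 (n : ℕ) : ℚ :=
  36 * (12 * (n : ℚ) - 13) * (12 * (n : ℚ) - 7) * (12 * (n : ℚ) - 5) * (12 * (n : ℚ) + 1) /
    ((n : ℚ) * ((n : ℚ) - 1) * (2 * (n : ℚ) - 1) ^ 2)

/-- The monic Atkin polynomials `A_{n,2}(X)`, defined by the three-term recursion
`A_{n+1,2} = (X - a_n)A_{n,2} - b_n A_{n-1,2}` for `n ≥ 2`. -/
noncomputable def A2 : ℕ → Polynomial ℚ
  | 0 => 1
  | 1 => X - C 720
  | 2 => X ^ 2 - C 1640 * X + C 269280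
  | n + 3 => (X - C (a2 (n + 2))) * A2 (n + 2) - C (b2 (n + 2)) * A2 (n + 1)

/-- Recursion coefficient `a_{n,6} = a_{n+1/2,0} = 24(144(n+1/2)²-41)/((2n+2)(2n))`. -/
noncomputable def a6 (n : ℕ) : ℚ :=
  24 * (144 * ((n : ℚ) + 1 / 2) ^ 2 - 41) / ((2 * (n : ℚ) + 2) * (2 * (n : ℚ)))

/-- Recursion coefficient `b_{n,6} = b_{n+1/2,0} = 36(12n-5)(12n-1)(12n+1)(12n+5)·4/((2n+1)(2n-1)(2n)²)`. -/
noncomputable def b6 (n : ℕ) : ℚ :=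
  36 * (12 * (n : ℚ) - 5) * (12 * (n : ℚ) - 1) * (12 * (n : ℚ) + 1) * (12 * (n : ℚ) + 5) * 4 /
    ((2 * (n : ℚ) + 1) * (2 * (n : ℚ) - 1) * (2 * (n : ℚ)) ^ 2)

/-- The monic Atkin-like polynomials `A_{n,6}(X)`, defined by the three-term recursion
`A_{n+1,6} = (X - a_{n+1/2,0})A_{n,6} - b_{n+1/2,0} A_{n-1,6}` for `n ≥ 1`. -/
noncomputable def A6 : ℕ → Polynomial ℚ
  | 0 => 1
  | 1 => X - C 1266
  | n + 2 => (X - C (a6 (n + 1))) * A6 (n + 1) - C (b6 (n + 1)) * A6 n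

noncomputable def cc (n : ℕ) : ℚ :=
  6 * (12 * (n : ℚ) - 1) * (12 * (n : ℚ) + 5) / ((n : ℚ) * (2 * (n : ℚ) + 1))

lemma idents (k : ℕ) :
    (cc (k+2) - a6 (k+2) = cc (k+3) - a2 (k+3)) ∧
    (cc (k+2) * (a2 (k+2) - a6 (k+2)) - b6 (k+2) = -b2 (k+3)) ∧
    (cc (k+2) * b2 (k+2) = b6 (k+2) * cc (k+1)) := by
  have hk : (0:ℚ) ≤ (k:ℚ) := Nat.cast_nonneg k
  set K : ℚ := (k : ℚ) with hK
  have h1 : K + 1 ≠ 0 := by positivity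
  have h2 : K + 2 ≠ 0 := by positivity
  have h3 : K + 3 ≠ 0 := by positivity
  have h4 : 2*K + 3 ≠ 0 := by positivity
  have h5 : 2*K + 5 ≠ 0 := by positivity
  have h6 : 2*K + 7 ≠ 0 := by positivity
  have h7 : 2*K + 4 ≠ 0 := by positivity
  have h8 : 2*K + 6 ≠ 0 := by positivity
  have ea2 : a2 (k+2) = 24 * (144*(K+2)^2 - 29) / ((2*K+5)*(2*K+3)) := by
    unfold a2; push_cast; rw [hK]; ring_nf
  have ea2' : a2 (k+3) = 24 * (144*(K+3)^2 - 29) / ((2*K+7)*(2*K+5)) := by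
    unfold a2; push_cast; rw [hK]; ring_nf
  have eb2 : b2 (k+2) = 36*(12*K+11)*(12*K+17)*(12*K+19)*(12*K+25) / ((K+2)*(K+1)*(2*K+3)^2) := by
    unfold b2; push_cast; rw [hK]; ring_nf
  have eb2' : b2 (k+3) = 36*(12*K+23)*(12*K+29)*(12*K+31)*(12*K+37) / ((K+3)*(K+2)*(2*K+5)^2) := by
    unfold b2; push_cast; rw [hK]; ring_nf
  have ea6 : a6 (k+2) = 24 * (144*(K+2+1/2)^2 - 41) / ((2*K+6)*(2*K+4)) := by
    unfold a6; push_cast; rw [hK]; ring_nf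
  have eb6 : b6 (k+2) = 36*(12*K+19)*(12*K+23)*(12*K+25)*(12*K+29)*4 / ((2*K+5)*(2*K+3)*(2*K+4)^2) := by
    unfold b6; push_cast; rw [hK]; ring_nf
  have ec1 : cc (k+1) = 6*(12*K+11)*(12*K+17) / ((K+1)*(2*K+3)) := by
    unfold cc; push_cast; rw [hK]; ring_nf
  have ec2 : cc (k+2) = 6*(12*K+23)*(12*K+29) / ((K+2)*(2*K+5)) := by
    unfold cc; push_cast; rw [hK]; ring_nf
  have ec3 : cc (k+3) = 6*(12*K+35)*(12*K+41) / ((K+3)*(2*K+7)) := by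
    unfold cc; push_cast; rw [hK]; ring_nf
  refine ⟨?_, ?_, ?_⟩
  · rw [ec2, ec3, ea6, ea2']; field_simp; ring
  · rw [ec2, ea2, ea6, eb6, eb2']; field_simp; ring
  · rw [ec2, eb2, eb6, ec1]; field_simp; ring

lemma step_alg (x q1 q2 q3 p1 p2 p3 p4 A2₂ A2₃ B2₂ B2₃ A6₂ B6₂ c1 c2 c3 : ℚ)
    (e1 : q3 = (x - A6₂) * q2 - B6₂ * q1)
    (e2 : x * q2 = p3 + c2 * p2) (e3 : x * q1 = p2 + c1 * p1)
    (e4 : p4 = (x - A2₃) * p3 - B2₃ * p2)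
    (e5 : p3 = (x - A2₂) * p2 - B2₂ * p1)
    (I1 : c2 - A6₂ = c3 - A2₃)
    (I2 : c2 * (A2₂ - A6₂) - B6₂ = -B2₃)
    (I3 : c2 * B2₂ = B6₂ * c1) :
    x * q3 = p4 + c3 * p3 := by
  linear_combination x * e1 + (x - A6₂) * e2 - B6₂ * e3 - e4 - c2 * e5 + p3 * I1 + p2 * I2 + p1 * I3

lemma key (x : ℚ) : ∀ n : ℕ, 1 ≤ n →
    x * (A6 n).eval x = (A2 (n+1)).eval x + cc n * (A2 n).eval x := by
  have H : ∀ n : ℕ, 1 ≤ n →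
      (x * (A6 n).eval x = (A2 (n+1)).eval x + cc n * (A2 n).eval x) ∧
      (x * (A6 (n+1)).eval x = (A2 (n+2)).eval x + cc (n+1) * (A2 (n+1)).eval x) := by
    intro n hn
    induction n, hn using Nat.le_induction with
    | base =>
      constructor
      · show x * (A6 1).eval x = (A2 2).eval x + cc 1 * (A2 1).eval x
        simp [A2, A6, cc]
        ring
      · show x * (A6 2).eval x = (A2 3).eval x + cc 2 * (A2 2).eval x
        show x * (A6 (0+2)).eval x = (A2 (0+3)).eval x + cc 2 * (A2 2).eval x
        simp [A2, A6, cc, a2, b2, a6, b6]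
        norm_num
        ring
    | succ n hn ih =>
      refine ⟨ih.2, ?_⟩
      obtain ⟨k, rfl⟩ : ∃ k, n = k + 1 := ⟨n - 1, by omega⟩
      obtain ⟨I1, I2, I3⟩ := idents k
      have e1 : (A6 (k+3)).eval x
          = (x - a6 (k+2)) * (A6 (k+2)).eval x - b6 (k+2) * (A6 (k+1)).eval x := by
        show (A6 ((k+1)+2)).eval x = _
        simp [A6]
      have e4 : (A2 (k+4)).eval x
          = (x - a2 (k+3)) * (A2 (k+3)).eval x - b2 (k+3) * (A2 (k+2)).eval x := by
        show (A2 ((k+1)+3)).eval x = _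
        simp [A2]
      have e5 : (A2 (k+3)).eval x
          = (x - a2 (k+2)) * (A2 (k+2)).eval x - b2 (k+2) * (A2 (k+1)).eval x := by
        show (A2 (k+3)).eval x = _
        simp [A2]
      exact step_alg x _ _ _ _ _ _ _ _ _ _ _ _ _ _ _ _ e1 ih.2 ih.1 e4 e5 I1 I2 I3
  exact fun n hn => (H n hn).1


/-- For `n ≥ 1`, `X·A_{n,6}(X) = A_{n+1,2}(X) + (6(12n-1)(12n+5)/(n(2n+1)))·A_{n,2}(X)`. -/
theorem X_mul_A6_eq (n : ℕ) (hn : 1 ≤ n) :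
    X * A6 n =
      A2 (n + 1) +
        C (6 * (12 * (n : ℚ) - 1) * (12 * (n : ℚ) + 5) / ((n : ℚ) * (2 * (n : ℚ) + 1))) * A2 n := by
  apply Polynomial.funext
  intro x
  have := key x n hn
  simp only [eval_mul, eval_add, eval_X, eval_C]
  simpa [cc] using this
end
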